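/- The subring of the ring of symmetric functions over ℤ[1/2] spanned by all Schur Q-functions Q_λ (λ a strict partition) is a polynomial ring on the generators Q_{(n)} for odd n ≥ 1; i.e., it equals ℤ[1/2][Q_{(1)}, Q_{(3)}, Q_{(5)}, …] and these generators are algebraically independent. -/

import Mathlib

open Finset

variable (A : Type*) [CommRing A]

/-- The complete homogeneous generating series `H(t) = 1 + h₁ t + h₂ t² + ⋯` in the
polynomial ring `A[h₁, h₂, …]` (the ring of symmetric functions), with `hₙ = X (n−1)`. -/
noncomputable def Hser : PowerSeries (MvPolynomial ℕ A) :=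
  PowerSeries.mk fun n => if n = 0 then 1 else MvPolynomial.X (n - 1)

/-- The Schur Q generating series `Q(t) = ∏ᵢ (1+xᵢt)/(1−xᵢt) = H(t)/H(−t)`. -/
noncomputable def Qser : PowerSeries (MvPolynomial ℕ A) :=
  Hser A * PowerSeries.invOfUnit (PowerSeries.rescale (-1) (Hser A)) 1

/-- The one-row Schur Q-function `Q_{(n)}`. -/
noncomputable def Qh (n : ℕ) : MvPolynomial ℕ A := PowerSeries.coeff n (Qser A)

/-- The two-row Schur Q-function
`Q_{(a,b)} = Q_a Q_b + 2 ∑_{i=1}^{b} (−1)^i Q_{a+i} Q_{b−i}`. -/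
noncomputable def Qh2 (a b : ℕ) : MvPolynomial ℕ A :=
  Qh A a * Qh A b + 2 * ∑ i ∈ Finset.Icc 1 b, (-1) ^ i * Qh A (a + i) * Qh A (b - i)

/-- Pad a list with a zero part if its length is even (so that, together with the extra
first part, the total number of parts becomes even). -/
def padList (l : List ℕ) : List ℕ := if Even l.length then l ++ [0] else l

/-- The Schur Q-function `Q_λ` of a strict partition `λ`, defined by the Pfaffian expansion
along the first row: for `λ = (λ₁ > λ₂ > ⋯ > λ_{2k} ≥ 0)` (padding with a zero part so that
the number of parts is even), `Q_λ = ∑_j (−1)^j Q_{(λ₁,λ_j)} Q_{λ ∖ {λ₁,λ_j}}`. -/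
noncomputable def Qlam : List ℕ → MvPolynomial ℕ A
  | [] => 1
  | [a] => Qh A a
  | a :: l =>
      ∑ j : Fin (padList l).length,
        (-1) ^ (j : ℕ) * Qh2 A a ((padList l).get j) * Qlam ((padList l).eraseIdx j)
  termination_by l => l.length
  decreasing_by
    have hj2 : (j : ℕ) < (padList l).length := j.isLt
    have hlen : (padList l).length ≤ l.length + 1 := by
      simp only [padList]; split <;> simp
    simp only [List.length_eraseIdx, List.length_cons]
    rw [if_pos hj2]
    omega

open PowerSeries

set_option linter.unusedSectionVars false
set_option linter.unnecessarySeqFocus false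
set_option linter.unusedVariables false

lemma constCoeff_Hser : constantCoeff (Hser A) = 1 := by
  rw [← coeff_zero_eq_constantCoeff]
  simp [Hser]

lemma constCoeff_rescale_Hser : constantCoeff (rescale (-1) (Hser A)) = 1 := by
  rw [← coeff_zero_eq_constantCoeff, coeff_rescale]
  simpa using congrArg (coeff 0) (rfl : Hser A = Hser A) |>.trans (by rw [coeff_zero_eq_constantCoeff, constCoeff_Hser])

lemma Qser_mul_rescale : Qser A * rescale (-1) (Qser A) = 1 := by
  set g := PowerSeries.invOfUnit (PowerSeries.rescale (-1) (Hser A)) 1 with hg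
  have h1 : rescale (-1) (Hser A) * g = 1 :=
    mul_invOfUnit _ 1 (by rw [constCoeff_rescale_Hser]; rfl)
  have h2 : rescale (-1) (rescale (-1) (Hser A)) = Hser A := by
    rw [rescale_rescale]; norm_num [rescale_one]
  have h3 : Hser A * rescale (-1) g = 1 := by
    have := congrArg (rescale (-1)) h1
    rwa [map_mul, map_one, h2] at this
  calc Hser A * g * rescale (-1) (Hser A * g)
      = (rescale (-1) (Hser A) * g) * (Hser A * rescale (-1) g) := by
        rw [map_mul]; ring
    _ = 1 := by rw [h1, h3, one_mul]

lemma Qh_zero : Qh A 0 = 1 := by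
  have := congrArg (constantCoeff) (Qser_mul_rescale A)
  rw [map_mul, map_one] at this
  have hc : constantCoeff (Qser A) = 1 := by
    unfold Qser
    rw [map_mul, constCoeff_Hser, one_mul, constantCoeff_invOfUnit]; rfl
  rw [Qh, coeff_zero_eq_constantCoeff, hc]

lemma Qrel (n : ℕ) (hn : 0 < n) :
    ∑ p ∈ antidiagonal n, (-1) ^ p.2 * Qh A p.1 * Qh A p.2 = 0 := by
  have := congrArg (coeff n) (Qser_mul_rescale A)
  rw [coeff_mul, coeff_one, if_neg hn.ne'] at this
  calc ∑ p ∈ antidiagonal n, (-1) ^ p.2 * Qh A p.1 * Qh A p.2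
      = ∑ p ∈ antidiagonal n, coeff p.1 (Qser A) * coeff p.2 (rescale (-1) (Qser A)) := by
        refine Finset.sum_congr rfl fun p _ => ?_
        rw [coeff_rescale]; unfold Qh; ring
    _ = 0 := this

noncomputable def ginv : PowerSeries (MvPolynomial ℕ A) :=
  PowerSeries.invOfUnit (PowerSeries.rescale (-1) (Hser A)) 1

noncomputable def Vsub (k : ℕ) : Subalgebra A (MvPolynomial ℕ A) :=
  Algebra.adjoin A (MvPolynomial.X '' {j | j < k})

lemma Vsub_mono {j k : ℕ} (h : j ≤ k) : Vsub A j ≤ Vsub A k :=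
  Algebra.adjoin_mono (Set.image_mono fun _ hi => lt_of_lt_of_le hi h)

lemma X_mem_Vsub {i k : ℕ} (h : i < k) : MvPolynomial.X i ∈ Vsub A k :=
  Algebra.subset_adjoin ⟨i, h, rfl⟩

lemma ginv_zero : PowerSeries.coeff 0 (ginv A) = 1 := by
  rw [coeff_zero_eq_constantCoeff, ginv, constantCoeff_invOfUnit]; rfl

lemma ginv_rec (m : ℕ) :
    PowerSeries.coeff (m+1) (ginv A) =
      ∑ i ∈ range (m+1), (-1) ^ i * MvPolynomial.X i * PowerSeries.coeff (m - i) (ginv A) := by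
  have h1 : rescale (-1) (Hser A) * ginv A = 1 := by
    refine mul_invOfUnit _ 1 ?_
    rw [← coeff_zero_eq_constantCoeff, coeff_rescale]
    simp [Hser]
  have h := congrArg (PowerSeries.coeff (m+1)) h1
  rw [PowerSeries.coeff_mul, PowerSeries.coeff_one, if_neg (Nat.succ_ne_zero m),
    Finset.Nat.sum_antidiagonal_eq_sum_range_succ_mk, Finset.sum_range_succ'] at h
  have h0 : PowerSeries.coeff 0 (rescale (-1) (Hser A)) * PowerSeries.coeff (m+1-0) (ginv A)
      = PowerSeries.coeff (m+1) (ginv A) := by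
    rw [coeff_rescale]; simp [Hser]
  rw [h0] at h
  have h2 : ∀ i ∈ range (m+1),
      PowerSeries.coeff (i+1) (rescale (-1) (Hser A)) * PowerSeries.coeff (m+1 - (i+1)) (ginv A)
      = -((-1) ^ i * MvPolynomial.X i * PowerSeries.coeff (m - i) (ginv A)) := by
    intro i _
    rw [coeff_rescale]
    have e : m + 1 - (i+1) = m - i := by omega
    rw [e]
    simp only [Hser, coeff_mk, Nat.succ_ne_zero, if_false, Nat.add_sub_cancel, pow_succ]
    ring
  rw [Finset.sum_congr rfl h2, Finset.sum_neg_distrib] at h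
  linear_combination h

lemma ginv_mem : ∀ n : ℕ, PowerSeries.coeff n (ginv A) ∈ Vsub A n := by
  intro n
  induction n using Nat.strong_induction_on with
  | _ n ih =>
    rcases n with _ | m
    · rw [ginv_zero]; exact one_mem _
    rw [ginv_rec]
    refine Subalgebra.sum_mem _ fun i hi => ?_
    rw [mem_range] at hi
    refine mul_mem (mul_mem (Subalgebra.pow_mem _ (neg_mem (one_mem _)) _)
      (X_mem_Vsub A hi)) ?_
    exact Vsub_mono A (by omega) (ih (m-i) (by omega))

lemma ginv_top (m : ℕ) :
    PowerSeries.coeff (m+1) (ginv A) - (-1) ^ m * MvPolynomial.X m ∈ Vsub A m := by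
  rw [ginv_rec, Finset.sum_range_succ, Nat.sub_self, ginv_zero, mul_one]
  have e : (∑ i ∈ range m, (-1) ^ i * MvPolynomial.X i * PowerSeries.coeff (m - i) (ginv A))
      + (-1) ^ m * MvPolynomial.X m - (-1) ^ m * MvPolynomial.X m
      = ∑ i ∈ range m, (-1) ^ i * MvPolynomial.X i * PowerSeries.coeff (m - i) (ginv A) := by
    ring
  rw [e]
  refine Subalgebra.sum_mem _ fun i hi => ?_
  rw [mem_range] at hi
  refine mul_mem (mul_mem (Subalgebra.pow_mem _ (neg_mem (one_mem _)) _)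
    (X_mem_Vsub A (by omega))) ?_
  exact Vsub_mono A (by omega) (ginv_mem A (m-i))

lemma Qh_eq_sum (n : ℕ) :
    Qh A n = ∑ p ∈ antidiagonal n,
      (PowerSeries.coeff p.1 (Hser A)) * PowerSeries.coeff p.2 (ginv A) := by
  rw [Qh, Qser, PowerSeries.coeff_mul]; rfl

/-- For odd `n = 2k+1`, `Qh n = 2 X_(n-1) + (lower)`. -/
lemma Qh_struct {m : ℕ} (hm : Even m) :
    Qh A (m+1) - 2 * MvPolynomial.X m ∈ Vsub A m := by
  rw [Qh_eq_sum, Finset.Nat.sum_antidiagonal_eq_sum_range_succ_mk, Finset.sum_range_succ']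
  have h0 : (PowerSeries.coeff 0 (Hser A)) * PowerSeries.coeff (m+1-0) (ginv A)
      = PowerSeries.coeff (m+1) (ginv A) := by
    simp [Hser]
  rw [h0, Finset.sum_range_succ]
  have hterm : ∀ i, (PowerSeries.coeff (i+1) (Hser A)) * PowerSeries.coeff (m+1-(i+1)) (ginv A)
      = MvPolynomial.X i * PowerSeries.coeff (m - i) (ginv A) := by
    intro i
    have e : m + 1 - (i+1) = m - i := by omega
    simp only [Hser, coeff_mk, Nat.succ_ne_zero, if_false, Nat.add_sub_cancel, e]
  simp only [hterm]
  rw [Nat.sub_self, ginv_zero, mul_one]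
  have hgs := ginv_top A m
  rw [hm.neg_one_pow, one_mul] at hgs
  have e : ∑ i ∈ range m, MvPolynomial.X i * PowerSeries.coeff (m - i) (ginv A)
      + MvPolynomial.X m + PowerSeries.coeff (m+1) (ginv A) - 2 * MvPolynomial.X m
      = (PowerSeries.coeff (m+1) (ginv A) - MvPolynomial.X m)
        + ∑ i ∈ range m, MvPolynomial.X i * PowerSeries.coeff (m - i) (ginv A) := by ring
  rw [e]
  refine add_mem hgs (Subalgebra.sum_mem _ fun i hi => ?_)
  rw [mem_range] at hi
  exact mul_mem (X_mem_Vsub A hi) (Vsub_mono A (by omega) (ginv_mem A (m-i)))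
-- appended to s2
open MvPolynomial in
lemma aeval_congr_Vsub {R : Type*} [CommRing R] [Algebra A R] (k : ℕ)
    (f f' : ℕ → R) (hf : ∀ j < k, f j = f' j) {r : MvPolynomial ℕ A} (hr : r ∈ Vsub A k) :
    MvPolynomial.aeval f r = MvPolynomial.aeval f' r := by
  induction hr using Algebra.adjoin_induction with
  | mem x hx => obtain ⟨j, hj, rfl⟩ := hx; simp [hf j hj]
  | algebraMap a => simp
  | add x y _ _ hx hy => simp [hx, hy]
  | mul x y _ _ hx hy => simp [hx, hy]

variable [Invertible (2 : A)]

noncomputable def Sfun : ℕ → MvPolynomial {n : ℕ // Odd n} A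
  | k =>
    if h : Odd (k+1) then
      (⅟(2:A)) • (MvPolynomial.X (⟨k+1, h⟩ : {n : ℕ // Odd n}) -
        MvPolynomial.aeval (fun j => if _ : j < k then Sfun j else 0)
          (Qh A (k+1) - 2 * MvPolynomial.X k))
    else 0
  termination_by k => k

lemma aeval_Sfun_Qh {n : ℕ} (hn : Odd n) :
    MvPolynomial.aeval (Sfun A) (Qh A n) = MvPolynomial.X (⟨n, hn⟩ : {n : ℕ // Odd n}) := by
  obtain ⟨m, rfl⟩ : ∃ m, n = m + 1 := ⟨n - 1, by have := hn.pos; omega⟩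
  have hr : Qh A (m+1) - 2 * MvPolynomial.X m ∈ Vsub A m :=
    Qh_struct A (by simp only [Nat.even_iff]; simp only [Nat.odd_iff] at hn; omega)
  have hcong : MvPolynomial.aeval (fun j => if _ : j < m then Sfun A j else 0)
      (Qh A (m+1) - 2 * MvPolynomial.X m)
      = MvPolynomial.aeval (Sfun A) (Qh A (m+1) - 2 * MvPolynomial.X m) :=
    aeval_congr_Vsub A m _ _ (fun j hj => by simp [hj]) hr
  have hS : Sfun A m = (⅟(2:A)) • (MvPolynomial.X (⟨m+1, hn⟩ : {n : ℕ // Odd n}) -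
      MvPolynomial.aeval (Sfun A) (Qh A (m+1) - 2 * MvPolynomial.X m)) := by
    rw [Sfun, dif_pos hn, hcong]
  have h2 : (2 : MvPolynomial {n : ℕ // Odd n} A) * Sfun A m
      = MvPolynomial.X (⟨m+1, hn⟩ : {n : ℕ // Odd n})
        - MvPolynomial.aeval (Sfun A) (Qh A (m+1) - 2 * MvPolynomial.X m) := by
    rw [hS, smul_sub]
    rw [show (2 : MvPolynomial {n : ℕ // Odd n} A) = algebraMap A _ 2 from (map_ofNat _ 2).symm]
    rw [mul_sub, ← Algebra.smul_def, ← Algebra.smul_def, smul_smul, smul_smul,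
      mul_invOf_self, one_smul, one_smul]
  have expand : MvPolynomial.aeval (Sfun A) (Qh A (m+1))
      = MvPolynomial.aeval (Sfun A) (Qh A (m+1) - 2 * MvPolynomial.X m)
        + 2 * Sfun A m := by
    rw [map_sub, map_mul, map_ofNat, MvPolynomial.aeval_X]; ring
  rw [expand, h2]; ring

theorem Qh_alg_indep : AlgebraicIndependent A (fun n : {n : ℕ // Odd n} => Qh A (n : ℕ)) := by
  have hcomp : (MvPolynomial.aeval (Sfun A)).comp
      (MvPolynomial.aeval (R := A) (fun n : {n : ℕ // Odd n} => Qh A (n : ℕ)))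
      = AlgHom.id A (MvPolynomial {n : ℕ // Odd n} A) := by
    apply MvPolynomial.algHom_ext
    intro n
    simp only [AlgHom.comp_apply, MvPolynomial.aeval_X, AlgHom.id_apply]
    exact aeval_Sfun_Qh A n.2
  rw [AlgebraicIndependent]
  have hli : Function.LeftInverse (MvPolynomial.aeval (Sfun A))
      (MvPolynomial.aeval (R := A) (fun n : {n : ℕ // Odd n} => Qh A (n : ℕ))) := fun p => by
    rw [← AlgHom.comp_apply, hcomp]; rfl
  exact hli.injective

lemma Qlam_nil : Qlam A [] = 1 := by rw [Qlam]

lemma Qlam_single (a : ℕ) : Qlam A [a] = Qh A a := by rw [Qlam]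

lemma Qlam_cons (a b : ℕ) (l : List ℕ) : Qlam A (a :: b :: l) =
    ∑ j : Fin (padList (b :: l)).length,
      (-1) ^ (j : ℕ) * Qh2 A a ((padList (b :: l)).get j)
        * Qlam A ((padList (b :: l)).eraseIdx j) := by
  rw [Qlam]
  all_goals simp

lemma padList_length_le (l : List ℕ) : (padList l).length ≤ l.length + 1 := by
  simp only [padList]; split <;> simp

noncomputable def Tsub : Subalgebra A (MvPolynomial ℕ A) :=
  Algebra.adjoin A {x : MvPolynomial ℕ A | ∃ n : ℕ, Odd n ∧ x = Qh A n}

variable [Invertible (2 : A)]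

lemma Qh_mem_Tsub : ∀ n : ℕ, Qh A n ∈ Tsub A := by
  intro n
  induction n using Nat.strong_induction_on with
  | _ n ih =>
    rcases Nat.even_or_odd n with he | ho
    · rcases Nat.eq_zero_or_pos n with rfl | hp
      · rw [Qh_zero]; exact one_mem _
      · obtain ⟨k, hk⟩ := he
        obtain ⟨m, rfl⟩ : ∃ m, n = m + 2 := ⟨n - 2, by omega⟩
        have hrel := Qrel A (m+2) (Nat.succ_pos _)
        rw [Finset.Nat.sum_antidiagonal_eq_sum_range_succ_mk] at hrel
        rw [Finset.sum_range_succ, Finset.sum_range_succ'] at hrel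
        have he2 : Even (m + 2 - 0) := ⟨k, by omega⟩
        have hf0 : (-1 : MvPolynomial ℕ A) ^ (m + 2 - 0) * Qh A 0 * Qh A (m+2 - 0)
            = Qh A (m+2) := by
          rw [Qh_zero, he2.neg_one_pow, Nat.sub_zero]; ring
        have hfn : (-1 : MvPolynomial ℕ A) ^ (m + 2 - (m+2)) * Qh A (m+2) * Qh A (m+2-(m+2))
            = Qh A (m+2) := by
          rw [Nat.sub_self, pow_zero, Qh_zero]; ring
        rw [hf0, hfn] at hrel
        have h2 : (2 : A) • Qh A (m+2)
            = -∑ i ∈ range (m+1), (-1) ^ (m+2-(i+1)) * Qh A (i+1) * Qh A (m+2-(i+1)) := by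
          rw [show ((2:A) • Qh A (m+2)) = (2 : MvPolynomial ℕ A) * Qh A (m+2) by
            rw [Algebra.smul_def, map_ofNat]]
          linear_combination hrel
        have hQ : Qh A (m+2) = (⅟(2:A)) •
            (-∑ i ∈ range (m+1), (-1) ^ (m+2-(i+1)) * Qh A (i+1) * Qh A (m+2-(i+1))) := by
          rw [← h2, smul_smul, invOf_mul_self, one_smul]
        rw [hQ]
        refine Subalgebra.smul_mem _ (neg_mem (Subalgebra.sum_mem _ fun i hi => ?_)) _
        rw [mem_range] at hi
        refine mul_mem (mul_mem (Subalgebra.pow_mem _ (neg_mem (one_mem _)) _) ?_) ?_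
        · exact ih (i+1) (by omega)
        · exact ih (m+2-(i+1)) (by omega)
    · exact Algebra.subset_adjoin ⟨n, ho, rfl⟩

lemma two_mem_sub {S : Subalgebra A (MvPolynomial ℕ A)} : (2 : MvPolynomial ℕ A) ∈ S := by
  have := Subalgebra.natCast_mem S 2
  simpa using this

lemma Qh2_mem_Tsub (a b : ℕ) : Qh2 A a b ∈ Tsub A := by
  refine add_mem (mul_mem (Qh_mem_Tsub A a) (Qh_mem_Tsub A b))
    (mul_mem (two_mem_sub A) (Subalgebra.sum_mem _ fun i _ => ?_))
  exact mul_mem (mul_mem (Subalgebra.pow_mem _ (neg_mem (one_mem _)) _)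
    (Qh_mem_Tsub A _)) (Qh_mem_Tsub A _)

lemma Qlam_mem_Tsub (l : List ℕ) : Qlam A l ∈ Tsub A := by
  have H : ∀ n (l : List ℕ), l.length ≤ n → Qlam A l ∈ Tsub A := by
    intro n
    induction n with
    | zero =>
      intro l hl
      rw [Nat.le_zero, List.length_eq_zero_iff] at hl
      subst hl
      rw [Qlam_nil]; exact one_mem _
    | succ n ihn =>
      intro l hl
      match l with
      | [] => rw [Qlam_nil]; exact one_mem _
      | [a] => rw [Qlam_single]; exact Qh_mem_Tsub A a
      | a :: b :: l' =>
        rw [Qlam_cons]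
        refine Subalgebra.sum_mem _ fun j _ => ?_
        refine mul_mem (mul_mem (Subalgebra.pow_mem _ (neg_mem (one_mem _)) _)
          (Qh2_mem_Tsub A _ _)) ?_
        refine ihn _ ?_
        have hj2 : (j : ℕ) < (padList (b :: l')).length := j.isLt
        have hlen := padList_length_le (b :: l')
        simp only [List.length_eraseIdx, if_pos hj2]
        simp only [List.length_cons] at *
        omega
  exact H l.length l le_rfl

-- Stage 5a: products of one-row Q's, weight, filtered spans
noncomputable def Pm (ν : Multiset ℕ) : MvPolynomial ℕ A := (ν.map (Qh A)).prod

def wM (ν : Multiset ℕ) : ℕ := (ν.map (· ^ 2)).sum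

lemma Pm_zero : Pm A 0 = 1 := rfl

lemma Pm_cons (a : ℕ) (ν : Multiset ℕ) : Pm A (a ::ₘ ν) = Qh A a * Pm A ν := by
  simp [Pm]

lemma Pm_add (μ ν : Multiset ℕ) : Pm A (μ + ν) = Pm A μ * Pm A ν := by
  simp [Pm]

lemma Pm_singleton (a : ℕ) : Pm A {a} = Qh A a := by
  simp [Pm]

lemma Pm_pair (a b : ℕ) : Pm A {a, b} = Qh A a * Qh A b := by
  simp [Pm, Multiset.insert_eq_cons, mul_comm]

lemma wM_cons (a : ℕ) (ν : Multiset ℕ) : wM (a ::ₘ ν) = a ^ 2 + wM ν := by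
  simp [wM]

lemma wM_add (μ ν : Multiset ℕ) : wM (μ + ν) = wM μ + wM ν := by
  simp [wM]

lemma wM_pair (a b : ℕ) : wM {a, b} = a ^ 2 + b ^ 2 := by
  simp [wM, Multiset.insert_eq_cons]

lemma wM_le_sq_sum (ν : Multiset ℕ) : wM ν ≤ ν.sum ^ 2 := by
  induction ν using Multiset.induction with
  | empty => simp [wM]
  | cons a ν ih =>
    rw [wM_cons, Multiset.sum_cons]
    have : (a + ν.sum) ^ 2 = a ^ 2 + 2 * a * ν.sum + ν.sum ^ 2 := by ring
    omega

/-- The span of products `Pm ν` with `ν.sum = d` and weight at least `w₀`. -/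
noncomputable def SAspan (d w0 : ℕ) : Submodule A (MvPolynomial ℕ A) :=
  Submodule.span A {x | ∃ ν : Multiset ℕ, ν.sum = d ∧ w0 ≤ wM ν ∧ x = Pm A ν}

lemma Pm_mem_SAspan (ν : Multiset ℕ) : Pm A ν ∈ SAspan A ν.sum (wM ν) :=
  Submodule.subset_span ⟨ν, rfl, le_rfl, rfl⟩

lemma SAspan_mono (d : ℕ) {w0 w1 : ℕ} (h : w0 ≤ w1) : SAspan A d w1 ≤ SAspan A d w0 :=
  Submodule.span_mono fun x ⟨ν, h1, h2, h3⟩ => ⟨ν, h1, le_trans h h2, h3⟩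

lemma Pm_mul_SAspan {d w0 : ℕ} (μ : Multiset ℕ) {x : MvPolynomial ℕ A} (hx : x ∈ SAspan A d w0) :
    Pm A μ * x ∈ SAspan A (μ.sum + d) (wM μ + w0) := by
  induction hx using Submodule.span_induction with
  | mem y hy =>
    obtain ⟨ν, h1, h2, rfl⟩ := hy
    exact Submodule.subset_span ⟨μ + ν, by simp [h1], by rw [wM_add]; omega, (Pm_add A μ ν).symm⟩
  | zero => rw [mul_zero]; exact zero_mem _
  | add y z _ _ hy hz => rw [mul_add]; exact add_mem hy hz
  | smul a y _ hy => rw [mul_smul_comm]; exact Submodule.smul_mem _ a hy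

lemma SAspan_mul_SAspan {d1 w1 d2 w2 : ℕ} {x y : MvPolynomial ℕ A}
    (hx : x ∈ SAspan A d1 w1) (hy : y ∈ SAspan A d2 w2) :
    x * y ∈ SAspan A (d1 + d2) (w1 + w2) := by
  induction hx using Submodule.span_induction with
  | mem x' hx' =>
    obtain ⟨ν, h1, h2, rfl⟩ := hx'
    subst h1
    exact SAspan_mono A _ (by omega) (Pm_mul_SAspan A ν hy)
  | zero => rw [zero_mul]; exact zero_mem _
  | add y' z _ _ hy' hz => rw [add_mul]; exact add_mem hy' hz
  | smul a y' _ hy' => rw [smul_mul_assoc]; exact Submodule.smul_mem _ a hy'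

lemma neg_one_pow_mul_eq_smul (i : ℕ) (z : MvPolynomial ℕ A) :
    (-1 : MvPolynomial ℕ A) ^ i * z = ((-1 : A) ^ i) • z := by
  rw [Algebra.smul_def, map_pow, map_neg, map_one]

lemma two_mul_eq_smul (z : MvPolynomial ℕ A) :
    (2 : MvPolynomial ℕ A) * z = (2 : A) • z := by
  rw [Algebra.smul_def, map_ofNat]

/-- Key pair straightening: for `b ≤ a`, the difference between `Q_a Q_b` and the two-row
`Q_(a,b)` lies in the span of strictly higher weight products. -/
lemma pair_key {a b : ℕ} (hba : b ≤ a) :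
    Qh A a * Qh A b - Qh2 A a b ∈ SAspan A (a + b) (a ^ 2 + b ^ 2 + 1) := by
  have : Qh A a * Qh A b - Qh2 A a b
      = -(2 * ∑ i ∈ Finset.Icc 1 b, (-1) ^ i * Qh A (a + i) * Qh A (b - i)) := by
    rw [Qh2]; ring
  rw [this]
  refine neg_mem ?_
  rw [two_mul_eq_smul]
  refine Submodule.smul_mem _ _ (Submodule.sum_mem _ fun i hi => ?_)
  rw [Finset.mem_Icc] at hi
  rw [mul_assoc, neg_one_pow_mul_eq_smul]
  refine Submodule.smul_mem _ _ ?_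
  rw [← Pm_pair]
  have h1 : ({a + i, b - i} : Multiset ℕ).sum = a + b := by
    simp [Multiset.insert_eq_cons]; omega
  have h2 : a ^ 2 + b ^ 2 + 1 ≤ wM {a + i, b - i} := by
    rw [wM_pair]
    obtain ⟨c, rfl⟩ : ∃ c, b = c + i := ⟨b - i, by omega⟩
    have hca : c < a := by omega
    have h1i : 1 ≤ i := hi.1
    have : c + i - i = c := by omega
    rw [this]
    nlinarith
  have := SAspan_mono A _ h2 (Pm_mem_SAspan A ({a + i, b - i} : Multiset ℕ))
  rwa [h1] at this

/-- Key square straightening: `Q_a²` lies in the span of strictly higher weight products. -/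
lemma square_key {a : ℕ} (ha : 1 ≤ a) :
    Qh A a * Qh A a ∈ SAspan A (2 * a) (2 * a ^ 2 + 1) := by
  have hrel := Qrel A (2 * a) (by omega)
  rw [Finset.Nat.sum_antidiagonal_eq_sum_range_succ_mk] at hrel
  have hmem : a ∈ Finset.range (2 * a + 1) := by simp; omega
  rw [← Finset.sum_erase_add _ _ hmem] at hrel
  have hfa : (-1 : MvPolynomial ℕ A) ^ (2 * a - a) * Qh A a * Qh A (2 * a - a)
      = (-1) ^ a * (Qh A a * Qh A a) := by
    rw [show 2 * a - a = a by omega]; ring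
  rw [hfa] at hrel
  have key : Qh A a * Qh A a
      = (-1) ^ a * -∑ k ∈ (Finset.range (2 * a + 1)).erase a,
          (-1) ^ (2 * a - k) * Qh A k * Qh A (2 * a - k) := by
    have hsq : ((-1 : MvPolynomial ℕ A)) ^ a * (-1) ^ a = 1 := by
      rw [← pow_add]; exact Even.neg_one_pow ⟨a, rfl⟩
    calc Qh A a * Qh A a = ((-1 : MvPolynomial ℕ A)) ^ a * ((-1) ^ a * (Qh A a * Qh A a)) := by
          rw [← mul_assoc, hsq, one_mul]
      _ = _ := by rw [show ((-1 : MvPolynomial ℕ A)) ^ a * (Qh A a * Qh A a)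
              = -∑ k ∈ (Finset.range (2 * a + 1)).erase a,
                  (-1) ^ (2 * a - k) * Qh A k * Qh A (2 * a - k) from by linear_combination hrel]
  rw [key, neg_one_pow_mul_eq_smul]
  refine Submodule.smul_mem _ _ (neg_mem (Submodule.sum_mem _ fun k hk => ?_))
  have hk' := Finset.mem_erase.mp hk
  have hkr := Finset.mem_range.mp hk'.2
  rw [mul_assoc, neg_one_pow_mul_eq_smul]
  refine Submodule.smul_mem _ _ ?_
  rw [← Pm_pair]
  have h1 : ({k, 2 * a - k} : Multiset ℕ).sum = 2 * a := by
    simp [Multiset.insert_eq_cons]; omega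
  have h2 : 2 * a ^ 2 + 1 ≤ wM {k, 2 * a - k} := by
    rw [wM_pair]
    obtain ⟨c, hc⟩ : ∃ c, 2 * a - k = c := ⟨2 * a - k, rfl⟩
    have hkc : k + c = 2 * a := by omega
    have hne : k ≠ a := hk'.1
    rw [hc]
    rcases lt_or_gt_of_ne hne with h | h
    · have : a ≤ c - 1 ∨ True := Or.inr trivial
      nlinarith [sq_nonneg (c - k), Nat.sub_add_cancel (le_of_lt (by omega : k < c))]
    · nlinarith [sq_nonneg (k - c), Nat.sub_add_cancel (le_of_lt (by omega : c < k))]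
  have := SAspan_mono A _ h2 (Pm_mem_SAspan A ({k, 2 * a - k} : Multiset ℕ))
  rwa [h1] at this

-- Stage 5b: list lemmas and the triangularity of Qlam
lemma coe_eq_get_cons_eraseIdx :
    ∀ (l : List ℕ) (j : ℕ) (h : j < l.length),
      (↑l : Multiset ℕ) = l.get ⟨j, h⟩ ::ₘ ↑(l.eraseIdx j) := by
  intro l
  induction l with
  | nil => intro j h; simp at h
  | cons a t ih =>
    intro j h
    cases j with
    | zero => simp [List.eraseIdx]
    | succ j =>
      have hj : j < t.length := by simpa using h
      rw [List.eraseIdx]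
      calc (↑(a :: t) : Multiset ℕ) = a ::ₘ ↑t := (Multiset.cons_coe a t).symm
        _ = a ::ₘ (t.get ⟨j, hj⟩ ::ₘ ↑(t.eraseIdx j)) := by rw [← ih j hj]
        _ = t.get ⟨j, hj⟩ ::ₘ (a ::ₘ ↑(t.eraseIdx j)) := Multiset.cons_swap _ _ _
        _ = _ := by rw [Multiset.cons_coe]; rfl

lemma padList_eq_or (l : List ℕ) : padList l = l ++ [0] ∨ padList l = l := by
  simp only [padList]; split <;> simp

lemma padList_length_odd (l : List ℕ) : ¬ Even (padList l).length := by
  simp only [padList]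
  split
  · next h =>
    simp only [List.length_append, List.length_cons, List.length_nil]
    rcases h with ⟨k, hk⟩
    rintro ⟨m, hm⟩
    omega
  · next h => exact h

lemma coe_padList (l : List ℕ) : (↑(padList l) : Multiset ℕ) = ↑l + ↑([0] : List ℕ)
    ∨ (↑(padList l) : Multiset ℕ) = ↑l := by
  rcases padList_eq_or l with h | h <;> rw [h]
  · exact Or.inl (Multiset.coe_add l [0]).symm
  · exact Or.inr rfl

lemma Pm_coe_padList (l : List ℕ) : Pm A ↑(padList l) = Pm A ↑l := by
  rcases coe_padList l with h | h <;> rw [h]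
  · rw [Pm_add]
    have : Pm A ↑([0] : List ℕ) = 1 := by
      show Pm A {0} = 1
      rw [Pm_singleton, Qh_zero]
    rw [this, mul_one]

lemma sum_coe_padList (l : List ℕ) : (↑(padList l) : Multiset ℕ).sum = (↑l : Multiset ℕ).sum := by
  rcases coe_padList l with h | h <;> rw [h] <;> simp

lemma wM_coe_padList (l : List ℕ) : wM ↑(padList l) = wM ↑l := by
  rcases coe_padList l with h | h <;> rw [h]
  · rw [wM_add]
    have : wM ↑([0] : List ℕ) = 0 := by simp [wM]
    rw [this, add_zero]

lemma chain'_ge_padList {l : List ℕ} (h : l.Chain' (· ≥ ·)) :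
    (padList l).Chain' (· ≥ ·) := by
  rcases padList_eq_or l with hp | hp <;> rw [hp]
  · exact List.IsChain.append h (List.isChain_singleton 0)
      (fun x _ y hy => by simp at hy; omega)
  · exact h

lemma chain'_ge_eraseIdx {l : List ℕ} (h : l.Chain' (· ≥ ·)) (j : ℕ) :
    (l.eraseIdx j).Chain' (· ≥ ·) := by
  unfold List.Chain' at h ⊢
  rw [List.isChain_iff_pairwise] at h ⊢
  exact h.sublist (List.eraseIdx_sublist l j)

lemma mem_padList_le {a : ℕ} {l : List ℕ} (h : (a :: l).Chain' (· ≥ ·))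
    {x : ℕ} (hx : x ∈ padList l) : x ≤ a := by
  have hmem : x ∈ l ∨ x = 0 := by
    rcases padList_eq_or l with hp | hp <;> rw [hp] at hx
    · rcases List.mem_append.mp hx with h' | h'
      · exact Or.inl h'
      · simp at h'; exact Or.inr h'
    · exact Or.inl hx
  rcases hmem with h' | rfl
  · unfold List.Chain' at h
    rw [List.isChain_iff_pairwise] at h
    exact (List.pairwise_cons.mp h).1 x h'
  · exact Nat.zero_le a

/-- **Triangularity**: for a weakly decreasing list `l`, `Q_λ` differs from the product
of one-row `Q`'s by a combination of strictly-higher-weight products. -/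
lemma Qlam_sub_Pm : ∀ (n : ℕ) (l : List ℕ), l.length ≤ n → l.Chain' (· ≥ ·) →
    Qlam A l - Pm A ↑l ∈ SAspan A (↑l : Multiset ℕ).sum (wM ↑l + 1) := by
  intro n
  induction n with
  | zero =>
    intro l hl _
    rw [Nat.le_zero, List.length_eq_zero_iff] at hl
    subst hl
    rw [Qlam_nil, show ((↑([] : List ℕ)) : Multiset ℕ) = 0 from rfl, Pm_zero, sub_self]
    exact zero_mem _
  | succ n ihn =>
    intro l hlen hch
    match l with
    | [] =>
      rw [Qlam_nil, show ((↑([] : List ℕ)) : Multiset ℕ) = 0 from rfl, Pm_zero, sub_self]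
      exact zero_mem _
    | [a] =>
      rw [Qlam_single, show ((↑([a] : List ℕ)) : Multiset ℕ) = {a} from rfl, Pm_singleton,
        sub_self]
      exact zero_mem _
    | a :: b :: t =>
      have hchbt : (b :: t).Chain' (· ≥ ·) := hch.tail
      set l' := padList (b :: t) with hl'def
      have hL : ¬ Even l'.length := padList_length_odd (b :: t)
      -- coe computations
      have hcoe : (↑(a :: b :: t) : Multiset ℕ) = a ::ₘ ↑(b :: t) := (Multiset.cons_coe _ _).symm
      have hPm0 : Pm A ↑(a :: b :: t) = Pm A (a ::ₘ (↑l' : Multiset ℕ)) := by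
        rw [hcoe, Pm_cons, Pm_cons, Pm_coe_padList]
      have hsum0 : (↑(a :: b :: t) : Multiset ℕ).sum = a + (↑l' : Multiset ℕ).sum := by
        rw [hcoe, Multiset.sum_cons, sum_coe_padList]
      have hw0 : wM ↑(a :: b :: t) = a ^ 2 + wM ↑l' := by
        rw [hcoe, wM_cons, wM_coe_padList]
      -- the per-index difference terms
      have hD : ∀ j : Fin l'.length,
          Qh2 A a (l'.get j) * Qlam A (l'.eraseIdx j) - Pm A (a ::ₘ (↑l' : Multiset ℕ))
            ∈ SAspan A (↑(a :: b :: t) : Multiset ℕ).sum (wM ↑(a :: b :: t) + 1) := by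
        intro j
        set bj := l'.get j with hbj
        set ej := l'.eraseIdx (j : ℕ) with hej
        have hperm : (↑l' : Multiset ℕ) = bj ::ₘ ↑ej :=
          coe_eq_get_cons_eraseIdx l' j j.isLt
        have hbja : bj ≤ a := mem_padList_le hch (by rw [hbj]; exact hl'def ▸ List.get_mem l' j)
        have hche : ej.Chain' (· ≥ ·) := chain'_ge_eraseIdx (chain'_ge_padList hchbt) _
        have hlene : ej.length ≤ n := by
          have h1 : l'.length ≤ (b :: t).length + 1 := padList_length_le (b :: t)
          have h2 : ej.length + 1 = l'.length := List.length_eraseIdx_add_one j.isLt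
          simp only [List.length_cons] at h1 hlen ⊢
          omega
        have hF := ihn ej hlene hche
        have hK := pair_key A hbja
        -- sums and weights
        have hsum' : (↑l' : Multiset ℕ).sum = bj + (↑ej : Multiset ℕ).sum := by
          rw [hperm, Multiset.sum_cons]
        have hw' : wM ↑l' = bj ^ 2 + wM ↑ej := by rw [hperm, wM_cons]
        have hPP : Qh A a * Qh A bj * Pm A ↑ej = Pm A (a ::ₘ (↑l' : Multiset ℕ)) := by
          rw [Pm_cons, hperm, Pm_cons]; ring
        have hsplit : Qh2 A a bj * Qlam A ej - Pm A (a ::ₘ (↑l' : Multiset ℕ))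
            = -((Qh A a * Qh A bj - Qh2 A a bj) * (Qlam A ej - Pm A ↑ej))
              - (Qh A a * Qh A bj - Qh2 A a bj) * Pm A ↑ej
              + (Qh A a * Qh A bj) * (Qlam A ej - Pm A ↑ej) := by
          rw [← hPP]; ring
        rw [hsplit]
        have hcast : ∀ {d w : ℕ} {x : MvPolynomial ℕ A},
            x ∈ SAspan A d w → d = (↑(a :: b :: t) : Multiset ℕ).sum →
            wM ↑(a :: b :: t) + 1 ≤ w →
            x ∈ SAspan A (↑(a :: b :: t) : Multiset ℕ).sum (wM ↑(a :: b :: t) + 1) := by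
          intro d w x hx hd hw
          exact hd ▸ SAspan_mono A _ hw hx
        refine add_mem (sub_mem (neg_mem ?_) ?_) ?_
        · exact hcast (SAspan_mul_SAspan A hK hF) (by linarith) (by linarith)
        · exact hcast (SAspan_mul_SAspan A hK (Pm_mem_SAspan A ↑ej)) (by linarith) (by linarith)
        · rw [← Pm_pair]
          have hsp : ({a, bj} : Multiset ℕ).sum = a + bj := by
            simp [Multiset.insert_eq_cons]
          have hwp : wM ({a, bj} : Multiset ℕ) = a ^ 2 + bj ^ 2 := wM_pair a bj
          exact hcast (SAspan_mul_SAspan A (Pm_mem_SAspan A {a, bj}) hF)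
            (by rw [hsp]; linarith) (by rw [hwp]; linarith)
      -- final assembly
      have hQl := Qlam_cons A a b t
      rw [← hl'def] at hQl
      have hQl' : Qlam A (a :: b :: t) = ∑ j : Fin l'.length,
          ((-1 : MvPolynomial ℕ A)) ^ (j : ℕ) * (Qh2 A a (l'.get j) * Qlam A (l'.eraseIdx j)) :=
        hQl.trans (Finset.sum_congr rfl fun j _ => by ring)
      have hsum1 : ∑ j : Fin l'.length, ((-1 : MvPolynomial ℕ A)) ^ (j : ℕ) = 1 := by
        rw [Fin.sum_univ_eq_sum_range (fun i => ((-1 : MvPolynomial ℕ A)) ^ i) l'.length,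
          neg_one_geom_sum, if_neg hL]
      have hrhs : ∑ j : Fin l'.length, ((-1 : MvPolynomial ℕ A)) ^ (j : ℕ) *
            (Qh2 A a (l'.get j) * Qlam A (l'.eraseIdx j) - Pm A (a ::ₘ (↑l' : Multiset ℕ)))
          = (∑ j : Fin l'.length, ((-1 : MvPolynomial ℕ A)) ^ (j : ℕ) *
              (Qh2 A a (l'.get j) * Qlam A (l'.eraseIdx j)))
            - (∑ j : Fin l'.length, ((-1 : MvPolynomial ℕ A)) ^ (j : ℕ)) *
                Pm A (a ::ₘ (↑l' : Multiset ℕ)) := by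
        rw [Finset.sum_mul, ← Finset.sum_sub_distrib]
        exact Finset.sum_congr rfl fun j _ => by ring
      have heq : Qlam A (a :: b :: t) - Pm A ↑(a :: b :: t)
          = ∑ j : Fin l'.length, ((-1 : MvPolynomial ℕ A)) ^ (j : ℕ) *
              (Qh2 A a (l'.get j) * Qlam A (l'.eraseIdx j) - Pm A (a ::ₘ (↑l' : Multiset ℕ))) := by
        rw [hrhs, hsum1, one_mul, ← hQl', ← hPm0]
      rw [heq]
      exact Submodule.sum_mem _ fun j _ => by
        rw [neg_one_pow_mul_eq_smul]
        exact Submodule.smul_mem _ _ (hD j)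

-- Stage 5c: spanning
noncomputable def Msub : Submodule A (MvPolynomial ℕ A) :=
  Submodule.span A {x : MvPolynomial ℕ A |
    ∃ l : List ℕ, l.Chain' (· > ·) ∧ (∀ a ∈ l, 0 < a) ∧ x = Qlam A l}

lemma SAspan_cast {d d' w w' : ℕ} (hd : d = d') (hw : w' ≤ w) :
    SAspan A d w ≤ SAspan A d' w' := hd ▸ SAspan_mono A _ hw

lemma filter_pos_eqs (ν : Multiset ℕ) :
    Pm A (ν.filter (0 < ·)) = Pm A ν ∧ (ν.filter (0 < ·)).sum = ν.sum
      ∧ wM (ν.filter (0 < ·)) = wM ν := by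
  induction ν using Multiset.induction with
  | empty => simp [Pm, wM]
  | cons a ν ih =>
    rw [Multiset.filter_cons]
    rcases Nat.eq_zero_or_pos a with rfl | ha
    · rw [if_neg (by simp), zero_add]
      rw [Pm_cons, Qh_zero, one_mul, Multiset.sum_cons, wM_cons]
      refine ⟨ih.1, ?_, ?_⟩
      · rw [ih.2.1, zero_add]
      · rw [ih.2.2]; norm_num
    · rw [if_pos ha, Multiset.singleton_add, Pm_cons, Pm_cons, Multiset.sum_cons,
        Multiset.sum_cons, wM_cons, wM_cons, ih.1, ih.2.1, ih.2.2]
      exact ⟨rfl, rfl, rfl⟩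

lemma pairwise_gt_of_ge_nodup : ∀ {l : List ℕ}, l.Pairwise (· ≥ ·) → l.Nodup →
    l.Pairwise (· > ·) := by
  intro l
  induction l with
  | nil => intro _ _; exact List.Pairwise.nil
  | cons a t ih =>
    intro h1 h2
    rw [List.pairwise_cons] at h1 ⊢
    rw [List.nodup_cons] at h2
    refine ⟨fun x hx => ?_, ih h1.2 h2.2⟩
    have hge := h1.1 x hx
    have hne : a ≠ x := fun he => h2.1 (he ▸ hx)
    omega

lemma exists_sorted_list {ν : Multiset ℕ} (hnd : ν.Nodup) :
    ∃ l : List ℕ, l.Chain' (· > ·) ∧ (↑l : Multiset ℕ) = ν ∧ l.Chain' (· ≥ ·) := by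
  refine ⟨Multiset.sort ν (· ≥ ·), ?_, Multiset.sort_eq _ _, ?_⟩
  · have hs : (Multiset.sort ν (· ≥ ·)).Pairwise (· ≥ ·) := Multiset.pairwise_sort _ _
    have hn : (Multiset.sort ν (· ≥ ·)).Nodup := by
      have : ((Multiset.sort ν (· ≥ ·) : List ℕ) : Multiset ℕ).Nodup := by
        rw [Multiset.sort_eq]; exact hnd
      exact Multiset.coe_nodup.mp this
    exact List.isChain_iff_pairwise.mpr (pairwise_gt_of_ge_nodup hs hn)
  · exact List.isChain_iff_pairwise.mpr (Multiset.pairwise_sort _ _)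

lemma exists_dup {ν : Multiset ℕ} (h : ¬ ν.Nodup) : ∃ a ρ, ν = a ::ₘ a ::ₘ ρ := by
  rw [Multiset.nodup_iff_count_le_one] at h
  push_neg at h
  obtain ⟨a, ha⟩ := h
  have hmem : a ∈ ν := by
    rw [← Multiset.count_pos]; omega
  obtain ⟨t, rfl⟩ := Multiset.exists_cons_of_mem hmem
  have hmem2 : a ∈ t := by
    rw [Multiset.count_cons_self] at ha
    rw [← Multiset.count_pos]; omega
  obtain ⟨ρ, rfl⟩ := Multiset.exists_cons_of_mem hmem2
  exact ⟨a, ρ, rfl⟩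

lemma sub_lt_helper {D wa wb k : ℕ} (h1 : wb ≤ D) (h2 : wa ≤ D) (h3 : wb + 1 ≤ wa)
    (h4 : D - wb = k) : D - wa < k := by omega

lemma Pm_mem_Msub (ν₀ : Multiset ℕ) : Pm A ν₀ ∈ Msub A := by
  suffices H : ∀ (k : ℕ) (ν : Multiset ℕ), ν.sum ^ 2 - wM ν = k → Pm A ν ∈ Msub A from
    H _ ν₀ rfl
  intro k
  induction k using Nat.strong_induction_on with
  | _ k ih =>
    intro ν hk
    obtain ⟨hPm', hsum', hw'⟩ := filter_pos_eqs A ν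
    set ν' := ν.filter (0 < ·) with hν'
    rw [← hPm']
    have hpos : ∀ x ∈ ν', 0 < x := fun x hx => (Multiset.mem_filter.mp hx).2
    have hkν' : ν'.sum ^ 2 - wM ν' = k := by rw [hsum', hw']; exact hk
    have hsub : SAspan A ν'.sum (wM ν' + 1) ≤ Msub A := by
      rw [SAspan, Submodule.span_le]
      rintro x ⟨μ, h1, h2, rfl⟩
      have hle : wM μ ≤ ν'.sum ^ 2 := h1 ▸ wM_le_sq_sum μ
      have hle' : wM ν' ≤ ν'.sum ^ 2 := wM_le_sq_sum ν'
      exact ih (μ.sum ^ 2 - wM μ)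
        (by rw [h1]; exact sub_lt_helper hle' hle h2 hkν') μ rfl
    by_cases hnd : ν'.Nodup
    · obtain ⟨l, hgt, hcoe, hge⟩ := exists_sorted_list hnd
      have hposl : ∀ a ∈ l, 0 < a := fun a ha => hpos a (by rw [← hcoe]; exact ha)
      have hgen : Qlam A l ∈ Msub A := Submodule.subset_span ⟨l, hgt, hposl, rfl⟩
      have hB := Qlam_sub_Pm A l.length l le_rfl hge
      rw [hcoe] at hB
      have hsplit : Pm A ν' = Qlam A l - (Qlam A l - Pm A ν') := by ring
      rw [hsplit]
      exact sub_mem hgen (hsub hB)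
    · obtain ⟨a, ρ, heq⟩ := exists_dup hnd
      have ha : 0 < a := hpos a (by rw [heq]; exact Multiset.mem_cons_self a _)
      have hmem : Pm A ν' ∈ SAspan A ν'.sum (wM ν' + 1) := by
        rw [heq, Pm_cons, Pm_cons, ← mul_assoc]
        have hprod := SAspan_mul_SAspan A (square_key A ha) (Pm_mem_SAspan A ρ)
        refine SAspan_cast A ?_ ?_ hprod
        · rw [Multiset.sum_cons, Multiset.sum_cons]; ring
        · rw [wM_cons, wM_cons]; exact le_of_eq (by ring)
      exact hsub hmem


/-- Over `ℤ[1/2]` (equivalently, over any commutative ring `A` in which `2`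
is invertible), the subring of the ring of symmetric functions spanned by all Schur
Q-functions `Q_λ` (`λ` a strict partition) is a polynomial ring on the generators `Q_{(n)}`
for odd `n ≥ 1`: it coincides with `A[Q_{(1)}, Q_{(3)}, Q_{(5)}, …]`, and these generators
are algebraically independent. -/
theorem stmt14 (A : Type*) [CommRing A] [Invertible (2 : A)] :
    Submodule.span A {x : MvPolynomial ℕ A |
        ∃ l : List ℕ, l.Chain' (· > ·) ∧ (∀ a ∈ l, 0 < a) ∧ x = Qlam A l}
      = Subalgebra.toSubmodule
          (Algebra.adjoin A {x : MvPolynomial ℕ A | ∃ n : ℕ, Odd n ∧ x = Qh A n}) ∧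
    AlgebraicIndependent A (fun n : {n : ℕ // Odd n} => Qh A (n : ℕ)) := by
  constructor
  · apply le_antisymm
    · rw [Submodule.span_le]
      rintro x ⟨l, -, -, rfl⟩
      exact Qlam_mem_Tsub A l
    · rw [Algebra.adjoin_eq_span, Submodule.span_le]
      rintro x hx
      obtain ⟨ν, rfl⟩ : ∃ ν : Multiset ℕ, x = Pm A ν := by
        refine Submonoid.closure_induction ?_ ⟨0, Pm_zero A |>.symm⟩ ?_ hx
        · rintro y ⟨n, -, rfl⟩
          exact ⟨{n}, (Pm_singleton A n).symm⟩
        · rintro y z _ _ ⟨ν₁, rfl⟩ ⟨ν₂, rfl⟩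
          exact ⟨ν₁ + ν₂, (Pm_add A ν₁ ν₂).symm⟩
      exact Pm_mem_Msub A ν
  · exact Qh_alg_indep A
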